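/- Fix real constants μ₁, μ₂, λ and nonnegative constants c₁, c₂, k₁, k₂, k₃, k₄, k₅, and positive constants ε₁, ε₂, ρ₁, ρ₂. Set M := max(k₁/ε₁ + k₄, k₂/ε₂ + k₅), assume M > 0, and set γ := (k₂/ε₂ + k₅)/M. Assume condition (3.2): c₂/ρ₂ < 1 and 1 − c₂/ρ₂ − γ·c₁/ρ₁ > 0; and condition (3.3): 2μ₂ + c₁ρ₁ + c₂ρ₂ + (c₁/ρ₁)(1 − c₂/ρ₂)/(1 − c₂/ρ₂ − γ·c₁/ρ₁) < λ < −2μ₁ − k₃ − k₁ε₁ − k₂ε₂ − M. Define λ̄₁ := −λ − 2μ₁ − k₃ − k₁ε₁ − k₂ε₂ and λ̄₂ := λ − 2μ₂ − c₁ρ₁ − c₂ρ₂. Suppose nonnegative real numbers a, b, c, ā, b̄, c̄ satisfy: a ≤ (1/λ̄₁)·((k₁/ε₁ + k₄)·b̄ + (k₂/ε₂ + k₅)·c̄), b ≤ (c₁/ρ₁)·a/λ̄₂, and c ≤ (c₁/ρ₁)·a/(1 − c₂/ρ₂). Then b + γ·c ≤ K·(b̄ + γ·c̄), where K := (c₁/ρ₁)·(M/λ̄₁)·(1/λ̄₂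 + γ/(1 − c₂/ρ₂)), and moreover K < 1. -/

import Mathlib

/-- The core contraction estimate in the proof of Theorem 3.1: combining the three
inequalities (3.8) yields `b + γc ≤ K(b̄ + γc̄)` with contraction factor `K < 1`. -/
theorem stmt_4 (μ₁ μ₂ lam c₁ c₂ k₁ k₂ k₃ k₄ k₅ ε₁ ε₂ ρ₁ ρ₂ M γ lb₁ lb₂ : ℝ)
    (hc₁ : 0 ≤ c₁) (hc₂ : 0 ≤ c₂)
    (hk₁ : 0 ≤ k₁) (hk₂ : 0 ≤ k₂) (hk₃ : 0 ≤ k₃) (hk₄ : 0 ≤ k₄) (hk₅ : 0 ≤ k₅)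
    (hε₁ : 0 < ε₁) (hε₂ : 0 < ε₂) (hρ₁ : 0 < ρ₁) (hρ₂ : 0 < ρ₂)
    (hM : M = max (k₁ / ε₁ + k₄) (k₂ / ε₂ + k₅)) (hMpos : 0 < M)
    (hγ : γ = (k₂ / ε₂ + k₅) / M)
    (h32a : c₂ / ρ₂ < 1) (h32b : 0 < 1 - c₂ / ρ₂ - γ * c₁ / ρ₁)
    (h33l : 2 * μ₂ + c₁ * ρ₁ + c₂ * ρ₂ +
        (c₁ / ρ₁) * (1 - c₂ / ρ₂) / (1 - c₂ / ρ₂ - γ * c₁ / ρ₁) < lam)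
    (h33r : lam < -2 * μ₁ - k₃ - k₁ * ε₁ - k₂ * ε₂ - M)
    (hlb₁ : lb₁ = -lam - 2 * μ₁ - k₃ - k₁ * ε₁ - k₂ * ε₂)
    (hlb₂ : lb₂ = lam - 2 * μ₂ - c₁ * ρ₁ - c₂ * ρ₂)
    (a b c abar bbar cbar : ℝ)
    (ha0 : 0 ≤ a) (hb0 : 0 ≤ b) (hc0 : 0 ≤ c)
    (habar : 0 ≤ abar) (hbbar : 0 ≤ bbar) (hcbar : 0 ≤ cbar)
    (hIa : a ≤ (1 / lb₁) * ((k₁ / ε₁ + k₄) * bbar + (k₂ / ε₂ + k₅) * cbar))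
    (hIb : b ≤ (c₁ / ρ₁) * a / lb₂)
    (hIc : c ≤ (c₁ / ρ₁) * a / (1 - c₂ / ρ₂)) :
    b + γ * c ≤
      (c₁ / ρ₁) * (M / lb₁) * (1 / lb₂ + γ / (1 - c₂ / ρ₂)) * (bbar + γ * cbar) ∧
    (c₁ / ρ₁) * (M / lb₁) * (1 / lb₂ + γ / (1 - c₂ / ρ₂)) < 1 := by
  have hr : 0 ≤ c₁ / ρ₁ := div_nonneg hc₁ hρ₁.le
  have hs : 0 < 1 - c₂ / ρ₂ := by linarith
  have hk25 : 0 ≤ k₂ / ε₂ + k₅ := by positivity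
  have hγ0 : 0 ≤ γ := by rw [hγ]; positivity
  have hγM : γ * M = k₂ / ε₂ + k₅ := by
    rw [hγ, div_mul_cancel₀ _ hMpos.ne']
  have hk14M : k₁ / ε₁ + k₄ ≤ M := by rw [hM]; exact le_max_left _ _
  have hlb1M : M < lb₁ := by rw [hlb₁]; linarith
  have hlb1pos : 0 < lb₁ := lt_trans hMpos hlb1M
  have hq : 0 ≤ (c₁ / ρ₁) * (1 - c₂ / ρ₂) / (1 - c₂ / ρ₂ - γ * c₁ / ρ₁) :=
    div_nonneg (mul_nonneg hr hs.le) h32b.le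
  have hlb2 : (c₁ / ρ₁) * (1 - c₂ / ρ₂) / (1 - c₂ / ρ₂ - γ * c₁ / ρ₁) < lb₂ := by
    rw [hlb₂]; linarith
  have hlb2pos : 0 < lb₂ := lt_of_le_of_lt hq hlb2
  -- bound on a
  have ha : a ≤ (M / lb₁) * (bbar + γ * cbar) := by
    have h1 : (k₁ / ε₁ + k₄) * bbar + (k₂ / ε₂ + k₅) * cbar ≤ M * bbar + γ * M * cbar := by
      rw [hγM]
      nlinarith [mul_le_mul_of_nonneg_right hk14M hbbar]
    calc a ≤ (1 / lb₁) * ((k₁ / ε₁ + k₄) * bbar + (k₂ / ε₂ + k₅) * cbar) := hIa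
      _ ≤ (1 / lb₁) * (M * bbar + γ * M * cbar) := by
          apply mul_le_mul_of_nonneg_left h1; positivity
      _ = (M / lb₁) * (bbar + γ * cbar) := by ring
  have hE0 : 0 ≤ (c₁ / ρ₁) * (1 / lb₂ + γ / (1 - c₂ / ρ₂)) := by positivity
  constructor
  · have h2 : b + γ * c ≤ (c₁ / ρ₁) * (1 / lb₂ + γ / (1 - c₂ / ρ₂)) * a := by
      have hc' : γ * c ≤ γ * ((c₁ / ρ₁) * a / (1 - c₂ / ρ₂)) :=
        mul_le_mul_of_nonneg_left hIc hγ0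
      have : (c₁ / ρ₁) * a / lb₂ + γ * ((c₁ / ρ₁) * a / (1 - c₂ / ρ₂))
          = (c₁ / ρ₁) * (1 / lb₂ + γ / (1 - c₂ / ρ₂)) * a := by ring
      linarith [hIb, hc']
    calc b + γ * c ≤ (c₁ / ρ₁) * (1 / lb₂ + γ / (1 - c₂ / ρ₂)) * a := h2
      _ ≤ (c₁ / ρ₁) * (1 / lb₂ + γ / (1 - c₂ / ρ₂)) * ((M / lb₁) * (bbar + γ * cbar)) :=
          mul_le_mul_of_nonneg_left ha hE0
      _ = (c₁ / ρ₁) * (M / lb₁) * (1 / lb₂ + γ / (1 - c₂ / ρ₂)) * (bbar + γ * cbar) := by ring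
  · -- K < 1
    have hrs : (c₁ / ρ₁) * (1 - c₂ / ρ₂) < (1 - c₂ / ρ₂ - γ * c₁ / ρ₁) * lb₂ := by
      have := (div_lt_iff₀ h32b).1 hlb2
      linarith
    have hfrac : (c₁ / ρ₁) / lb₂ < (1 - c₂ / ρ₂ - γ * c₁ / ρ₁) / (1 - c₂ / ρ₂) :=
      (div_lt_div_iff₀ hlb2pos hs).2 hrs
    have hE1 : (c₁ / ρ₁) * (1 / lb₂ + γ / (1 - c₂ / ρ₂)) < 1 := by
      have key : (1 - c₂ / ρ₂ - γ * c₁ / ρ₁) / (1 - c₂ / ρ₂)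
          + γ * (c₁ / ρ₁) / (1 - c₂ / ρ₂) = 1 := by
        rw [← add_div,
          show 1 - c₂ / ρ₂ - γ * c₁ / ρ₁ + γ * (c₁ / ρ₁) = 1 - c₂ / ρ₂ by ring,
          div_self hs.ne']
      have : (c₁ / ρ₁) * (1 / lb₂ + γ / (1 - c₂ / ρ₂))
          = (c₁ / ρ₁) / lb₂ + γ * (c₁ / ρ₁) / (1 - c₂ / ρ₂) := by ring
      linarith
    have hM1 : M / lb₁ < 1 := (div_lt_one hlb1pos).2 hlb1M
    have hM0 : 0 < M / lb₁ := div_pos hMpos hlb1pos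
    have heq : (c₁ / ρ₁) * (M / lb₁) * (1 / lb₂ + γ / (1 - c₂ / ρ₂))
        = (M / lb₁) * ((c₁ / ρ₁) * (1 / lb₂ + γ / (1 - c₂ / ρ₂))) := by ring
    rw [heq]
    exact lt_of_le_of_lt (mul_le_of_le_one_left hE0 hM1.le) hE1
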